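/- Let (ξ_i)_{i≥1} be i.i.d. standard Gaussian real random variables on a probability space (Ω, 𝓕, P), and let (φ_M)_{M≥1} be positive real numbers with φ_M → 0 as M → ∞. Then for every real u ≠ 0, the random variables M^{-1} · ( M^{-1/2} Σ_{i=1}^M (1{ξ_i ≤ u/φ_M} − 1/2) )² converge in probability to 1/4 as M → ∞. -/

import Mathlib

open MeasureTheory ProbabilityTheory Filter Set Topology

/-- **Behaviour of the randomised statistic under the alternative.**  Let `(ξ_i)_{i ≥ 1}` be
i.i.d. standard Gaussian random variables and `(φ_M)_{M ≥ 1}` positive reals with `φ_M → 0`.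
Then for every real `u ≠ 0`, the random variables
`M⁻¹ (M^{-1/2} ∑_{i=1}^M (1{ξ_i ≤ u/φ_M} − 1/2))²` converge in probability to `1/4`. -/
theorem randomised_statistic_alternative_limit {Ω : Type*} [MeasurableSpace Ω]
    (P : Measure Ω) [IsProbabilityMeasure P]
    (ξ : ℕ → Ω → ℝ) (hmeas : ∀ i, Measurable (ξ i))
    (hindep : iIndepFun (fun n => ξ (n + 1)) P)
    (hlaw : ∀ i, 1 ≤ i → P.map (ξ i) = gaussianReal 0 1)
    (φ : ℕ → ℝ) (hφpos : ∀ M, 0 < φ M) (hφ0 : Tendsto φ atTop (nhds 0))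
    (u : ℝ) (hu : u ≠ 0) :
    TendstoInMeasure P
      (fun (M : ℕ) ω => ((M : ℝ))⁻¹ *
        ((1 / Real.sqrt M) *
          ∑ i ∈ Finset.Icc 1 M, ((if ξ i ω ≤ u / φ M then (1 : ℝ) else 0) - 1 / 2)) ^ 2)
      atTop (fun _ => 1 / 4) := by
  classical
  set G : Measure ℝ := gaussianReal 0 1 with hG
  set t : ℕ → ℝ := fun M => u / φ M with ht
  set Y : ℕ → ℕ → Ω → ℝ := fun M i ω => (if ξ i ω ≤ t M then (1:ℝ) else 0) - 1/2 with hYdef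
  set S : ℕ → Ω → ℝ := fun M ω => (M:ℝ)⁻¹ * ∑ i ∈ Finset.Icc 1 M, Y M i ω with hSdef
  set c : ℝ := if 0 < u then 1/2 else -(1/2) with hcdef
  have hc2 : c ^ 2 = 1/4 := by rw [hcdef]; split_ifs <;> norm_num
  have habsc : |c| ≤ 1/2 := by rw [hcdef]; split_ifs <;> norm_num [abs_le]
  have hYmeas : ∀ M i, Measurable (Y M i) := fun M i =>
    (Measurable.ite ((hmeas i) measurableSet_Iic) measurable_const measurable_const).sub
      measurable_const
  have hYbound : ∀ M i ω, |Y M i ω| ≤ 1/2 := by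
    intro M i ω
    simp only [hYdef]
    split <;> norm_num [abs_le]
  have hYmem : ∀ M i, MemLp (Y M i) 2 P := fun M i =>
    MemLp.of_bound (hYmeas M i).aestronglyMeasurable (1/2)
      (Filter.Eventually.of_forall fun ω => by
        rw [Real.norm_eq_abs]; exact hYbound M i ω)
  have hYint : ∀ M i, Integrable (Y M i) P := fun M i => (hYmem M i).integrable one_le_two
  have hYmean : ∀ M i, 1 ≤ i → ∫ ω, Y M i ω ∂P = cdf G (t M) - 1/2 := by
    intro M i hi
    have hIint : Integrable (fun ω => if ξ i ω ≤ t M then (1:ℝ) else 0) P := by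
      refine (MemLp.of_bound
        ((Measurable.ite ((hmeas i) measurableSet_Iic) measurable_const
          measurable_const).aestronglyMeasurable) 1
        (Filter.Eventually.of_forall fun ω => ?_) : MemLp _ 1 P).integrable le_rfl
      rw [Real.norm_eq_abs]
      split <;> norm_num
    have h2 : ∫ ω, Y M i ω ∂P =
        (∫ ω, (if ξ i ω ≤ t M then (1:ℝ) else 0) ∂P) - ∫ _ω, (1/2 : ℝ) ∂P :=
      integral_sub hIint (integrable_const _)
    have h1 : (fun ω => if ξ i ω ≤ t M then (1:ℝ) else 0)
        = (ξ i ⁻¹' Iic (t M)).indicator 1 := by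
      ext ω
      simp [Set.indicator_apply, Set.mem_preimage, Set.mem_Iic]
    rw [h2, h1, integral_indicator_one ((hmeas i) measurableSet_Iic), measureReal_def]
    rw [← Measure.map_apply (hmeas i) measurableSet_Iic, hlaw i hi, cdf_eq_real, measureReal_def]
    simp
  have hYvar : ∀ M i, variance (Y M i) P ≤ 1/4 := by
    intro M i
    refine (variance_le_expectation_sq (hYmeas M i).aestronglyMeasurable).trans ?_
    have hmono : ∫ ω, (Y M i ^ 2) ω ∂P ≤ ∫ _ω, (1/4:ℝ) ∂P := by
      refine integral_mono ((hYmem M i).integrable_sq) (integrable_const _) fun ω => ?_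
      simp only [Pi.pow_apply]
      calc Y M i ω ^ 2 = |Y M i ω| ^ 2 := (sq_abs _).symm
        _ ≤ (1/2) ^ 2 := pow_le_pow_left₀ (abs_nonneg _) (hYbound M i ω) 2
        _ = 1/4 := by norm_num
    simpa using hmono
  have hYindep : ∀ M, Set.Pairwise ↑(Finset.Icc 1 M)
      (fun i j => IndepFun (Y M i) (Y M j) P) := by
    intro M i hi j hj hij
    simp only [Finset.coe_Icc, Set.mem_Icc] at hi hj
    have hξ : IndepFun (ξ i) (ξ j) P := by
      have h := hindep.indepFun (i := i - 1) (j := j - 1) (by omega)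
      have hi1 : i - 1 + 1 = i := by omega
      have hj1 : j - 1 + 1 = j := by omega
      rwa [hi1, hj1] at h
    have hf : Measurable fun x : ℝ => (if x ≤ t M then (1:ℝ) else 0) - 1/2 :=
      (Measurable.ite measurableSet_Iic measurable_const measurable_const).sub measurable_const
    exact hξ.comp hf hf
  have hSumvar : ∀ M, variance (fun ω => ∑ i ∈ Finset.Icc 1 M, Y M i ω) P ≤ M * (1/4) := by
    intro M
    have he : (fun ω => ∑ i ∈ Finset.Icc 1 M, Y M i ω) = ∑ i ∈ Finset.Icc 1 M, Y M i := by
      ext ω; simp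
    rw [he, IndepFun.variance_sum (fun i _ => hYmem M i) (hYindep M)]
    calc ∑ i ∈ Finset.Icc 1 M, variance (Y M i) P
        ≤ ∑ _i ∈ Finset.Icc 1 M, (1/4:ℝ) := Finset.sum_le_sum fun i _ => hYvar M i
      _ = M * (1/4) := by simp [Nat.card_Icc]
  have hSvar : ∀ M, 1 ≤ M → variance (S M) P ≤ (M:ℝ)⁻¹ * (1/4) := by
    intro M hM
    have hMpos : (0:ℝ) < M := by exact_mod_cast hM
    have hSsmul : S M = (M:ℝ)⁻¹ • (fun ω => ∑ i ∈ Finset.Icc 1 M, Y M i ω) := rfl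
    rw [hSsmul, variance_smul]
    calc ((M:ℝ)⁻¹) ^ 2 * variance (fun ω => ∑ i ∈ Finset.Icc 1 M, Y M i ω) P
        ≤ ((M:ℝ)⁻¹) ^ 2 * (M * (1/4)) :=
          mul_le_mul_of_nonneg_left (hSumvar M) (sq_nonneg _)
      _ = (M:ℝ)⁻¹ * (1/4) := by field_simp
  have hSmem : ∀ M, MemLp (S M) 2 P := by
    intro M
    have he : (fun ω => ∑ i ∈ Finset.Icc 1 M, Y M i ω) = ∑ i ∈ Finset.Icc 1 M, Y M i := by
      ext ω; simp
    have h := (memLp_finset_sum' (Finset.Icc 1 M) (fun i _ => hYmem M i)).const_mul ((M:ℝ)⁻¹)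
    rw [← he] at h
    exact h
  have hSmean : ∀ M, 1 ≤ M → ∫ ω, S M ω ∂P = cdf G (t M) - 1/2 := by
    intro M hM
    have h1 : ∫ ω, S M ω ∂P = (M:ℝ)⁻¹ * ∑ i ∈ Finset.Icc 1 M, ∫ ω, Y M i ω ∂P := by
      rw [hSdef]
      rw [integral_const_mul, integral_finset_sum _ (fun i _ => hYint M i)]
    rw [h1, Finset.sum_congr rfl (fun i hi => hYmean M i (Finset.mem_Icc.mp hi).1),
      Finset.sum_const, Nat.card_Icc, nsmul_eq_mul]
    have hMc : ((M + 1 - 1 : ℕ) : ℝ) = (M:ℝ) := by simp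
    rw [hMc]
    have hMne : (M:ℝ) ≠ 0 := by
      have : (0:ℝ) < M := by exact_mod_cast hM
      exact this.ne'
    field_simp
  have hSbound : ∀ M ω, |S M ω| ≤ 1/2 := by
    intro M ω
    have h1 : |∑ i ∈ Finset.Icc 1 M, Y M i ω| ≤ ∑ _i ∈ Finset.Icc 1 M, (1/2:ℝ) :=
      (Finset.abs_sum_le_sum_abs _ _).trans (Finset.sum_le_sum fun i _ => hYbound M i ω)
    have h2 : (∑ _i ∈ Finset.Icc 1 M, (1/2:ℝ)) = M * (1/2) := by simp [Nat.card_Icc]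
    have hM0 : (0:ℝ) ≤ (M:ℝ)⁻¹ := by positivity
    calc |S M ω| = (M:ℝ)⁻¹ * |∑ i ∈ Finset.Icc 1 M, Y M i ω| := by
          rw [hSdef, abs_mul, abs_inv, Nat.abs_cast]
      _ ≤ (M:ℝ)⁻¹ * (M * (1/2)) := by
          rw [← h2]; exact mul_le_mul_of_nonneg_left h1 hM0
      _ ≤ 1/2 := by
          rcases Nat.eq_zero_or_pos M with h | h
          · simp [h]
          · have hMpos : (0:ℝ) < M := by exact_mod_cast h
            rw [← mul_assoc, inv_mul_cancel₀ hMpos.ne', one_mul]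
  have hmc : Tendsto (fun M => cdf G (t M) - 1/2) atTop (𝓝 c) := by
    have hφ' : Tendsto φ atTop (𝓝[>] 0) :=
      tendsto_nhdsWithin_of_tendsto_nhds_of_eventually_within _ hφ0
        (Filter.Eventually.of_forall hφpos)
    have hinv : Tendsto (fun M => (φ M)⁻¹) atTop atTop := tendsto_inv_nhdsGT_zero.comp hφ'
    rcases hu.lt_or_gt with hneg | hpos
    · have hT : Tendsto t atTop atBot := by
        simp only [ht, div_eq_mul_inv]
        exact (tendsto_const_mul_atBot_of_neg hneg).2 hinv
      have h0 : Tendsto (fun M => cdf G (t M)) atTop (𝓝 0) := (tendsto_cdf_atBot G).comp hT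
      have hcc : c = -(1/2) := if_neg (not_lt.mpr hneg.le)
      rw [hcc]
      simpa using h0.sub_const (1/2)
    · have hT : Tendsto t atTop atTop := by
        simp only [ht, div_eq_mul_inv]
        exact Tendsto.const_mul_atTop hpos hinv
      have h0 : Tendsto (fun M => cdf G (t M)) atTop (𝓝 1) := (tendsto_cdf_atTop G).comp hT
      have hcc : c = 1/2 := if_pos hpos
      rw [hcc]
      have := h0.sub_const (1/2)
      norm_num at this ⊢
      exact this
  rw [tendstoInMeasure_iff_dist]
  intro ε hε
  have hε2 : (0:ℝ) < ε/2 := by positivity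
  have hBtend : Tendsto (fun M : ℕ => ENNReal.ofReal ((M:ℝ)⁻¹ * (1/4) / (ε/2)^2)) atTop
      (𝓝 0) := by
    have hreal : Tendsto (fun M : ℕ => (M:ℝ)⁻¹ * (1/4) / (ε/2)^2) atTop (𝓝 0) := by
      have h := tendsto_inv_atTop_zero.comp (tendsto_natCast_atTop_atTop (R := ℝ))
      have h2 := (h.mul_const (1/4)).div_const ((ε/2)^2)
      simpa using h2
    have := ENNReal.tendsto_ofReal hreal
    simpa using this
  refine tendsto_of_tendsto_of_tendsto_of_le_of_le' tendsto_const_nhds hBtend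
    (Filter.Eventually.of_forall fun M => zero_le) ?_
  have hev1 : ∀ᶠ M in atTop, |(cdf G (t M) - 1/2) - c| < ε / 2 := by
    have h := hmc (Metric.ball_mem_nhds c hε2)
    filter_upwards [h] with M hM
    rw [Set.mem_preimage, Metric.mem_ball, Real.dist_eq] at hM
    exact hM
  filter_upwards [hev1, eventually_ge_atTop 1] with M hmc1 hM1
  have hMpos : (0:ℝ) < M := by exact_mod_cast hM1
  have hsub : {ω | ε ≤ dist (((M : ℝ))⁻¹ *
        ((1 / Real.sqrt M) *
          ∑ i ∈ Finset.Icc 1 M, ((if ξ i ω ≤ u / φ M then (1 : ℝ) else 0) - 1 / 2)) ^ 2) (1/4)}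
      ⊆ {ω | ε/2 ≤ |S M ω - ∫ x, S M x ∂P|} := by
    intro ω hω
    simp only [Set.mem_setOf_eq] at hω ⊢
    rw [hSmean M hM1]
    set A : ℝ := ∑ i ∈ Finset.Icc 1 M, ((if ξ i ω ≤ u / φ M then (1 : ℝ) else 0) - 1 / 2) with hA
    have hsA : S M ω = (M:ℝ)⁻¹ * A := rfl
    have hsq : Real.sqrt M ^ 2 = M := Real.sq_sqrt (Nat.cast_nonneg M)
    have hstat : (M:ℝ)⁻¹ * ((1 / Real.sqrt M) * A) ^ 2 = (S M ω) ^ 2 := by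
      rw [hsA, mul_pow, div_pow, one_pow, hsq, mul_pow, one_div]
      ring
    rw [hstat] at hω
    set s : ℝ := S M ω with hs
    set m : ℝ := cdf G (t M) - 1/2 with hm
    have h1 : dist (s ^ 2) (1/4) = |s ^ 2 - c ^ 2| := by rw [Real.dist_eq, hc2]
    have h2 : |s ^ 2 - c ^ 2| ≤ |s - c| := by
      have hfac : s ^ 2 - c ^ 2 = (s - c) * (s + c) := by ring
      rw [hfac, abs_mul]
      have hsc : |s + c| ≤ 1 := (abs_add_le _ _).trans (by
        have := hSbound M ω
        rw [← hs] at this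
        linarith)
      calc |s - c| * |s + c| ≤ |s - c| * 1 :=
            mul_le_mul_of_nonneg_left hsc (abs_nonneg _)
        _ = |s - c| := mul_one _
    have h3 : |s - c| ≤ |s - m| + |m - c| := by
      calc |s - c| = |(s - m) + (m - c)| := by rw [sub_add_sub_cancel]
        _ ≤ |s - m| + |m - c| := abs_add_le _ _
    have h4 : |m - c| < ε / 2 := hmc1
    have hω' : ε ≤ |s - c| := le_trans (by rwa [h1] at hω) h2
    linarith
  calc P {ω | ε ≤ dist (((M : ℝ))⁻¹ *
        ((1 / Real.sqrt M) *
          ∑ i ∈ Finset.Icc 1 M, ((if ξ i ω ≤ u / φ M then (1 : ℝ) else 0) - 1 / 2)) ^ 2) (1/4)}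
      ≤ P {ω | ε/2 ≤ |S M ω - ∫ x, S M x ∂P|} := measure_mono hsub
    _ ≤ ENNReal.ofReal (variance (S M) P / (ε/2)^2) :=
        meas_ge_le_variance_div_sq (hSmem M) hε2
    _ ≤ ENNReal.ofReal ((M:ℝ)⁻¹ * (1/4) / (ε/2)^2) := by
        apply ENNReal.ofReal_le_ofReal
        gcongr
        exact hSvar M hM1
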